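/- Let M ∈ ℝ^{n×n} be symmetric positive definite, let σ > 0 be such that σI − M⁻¹ is positive semidefinite, let C ⊆ ℝ^n be a nonempty closed convex set, and let g, λ⁰ ∈ ℝ^n. Define d = (1/σ) M⁻¹ g + λ⁰ − (1/σ) M⁻¹ λ⁰. Then λ̃ = d − (1/σ) Π_C(σ d) is the unique minimizer over ℝ^n of the function λ ↦ δ*_C(λ) + (1/2)(λ − g)ᵀ M⁻¹ (λ − g) + (1/2)(λ − λ⁰)ᵀ (σI − M⁻¹)(λ − λ⁰). -/

import Mathlib

open Matrix

/-- The support function `δ*_B(lam) = sup_{z ∈ B} ⟨lam, z⟩` of a set `B ⊆ ℝ^n`,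
with values in `EReal`. -/
noncomputable def suppFn {n : ℕ} (B : Set (Fin n → ℝ)) (lam : Fin n → ℝ) : EReal :=
  ⨆ z : B, ((lam ⬝ᵥ (z : Fin n → ℝ) : ℝ) : EReal)

/-- The objective `λ ↦ δ*_C(λ) + (1/2)(λ-g)ᵀ M⁻¹ (λ-g) + (1/2)(λ-λ⁰)ᵀ(σI - M⁻¹)(λ-λ⁰)`. -/
noncomputable def objLam {n : ℕ} (M : Matrix (Fin n) (Fin n) ℝ) (σ : ℝ)
    (C : Set (Fin n → ℝ)) (g lam0 lam : Fin n → ℝ) : EReal :=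
  suppFn C lam +
    (((1 : ℝ)/2 * ((lam - g) ⬝ᵥ (M⁻¹ *ᵥ (lam - g)))
      + (1 : ℝ)/2 * ((lam - lam0) ⬝ᵥ ((σ • (1 : Matrix (Fin n) (Fin n) ℝ) - M⁻¹) *ᵥ (lam - lam0))) : ℝ) : EReal)

/-- Auxiliary: the real quadratic part of the objective. -/
noncomputable def quadPart {n : ℕ} (M : Matrix (Fin n) (Fin n) ℝ) (σ : ℝ)
    (g lam0 lam : Fin n → ℝ) : ℝ :=
  (1 : ℝ)/2 * ((lam - g) ⬝ᵥ (M⁻¹ *ᵥ (lam - g)))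
    + (1 : ℝ)/2 * ((lam - lam0) ⬝ᵥ ((σ • (1 : Matrix (Fin n) (Fin n) ℝ) - M⁻¹) *ᵥ (lam - lam0)))

/-- Auxiliary: nonnegativity of the real dot product of a vector with itself. -/
lemma dot_self_nonneg' {n : ℕ} (v : Fin n → ℝ) : 0 ≤ v ⬝ᵥ v :=
  Finset.sum_nonneg fun i _ => mul_self_nonneg (v i)

/-- Auxiliary: expansion of `|a - t b|²`. -/
lemma dot_sub_smul_expand {n : ℕ} (a b : Fin n → ℝ) (t : ℝ) :
    (a - t • b) ⬝ᵥ (a - t • b) = a ⬝ᵥ a - 2 * t * (a ⬝ᵥ b) + t^2 * (b ⬝ᵥ b) := by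
  simp only [dotProduct_sub, sub_dotProduct, dotProduct_smul, smul_dotProduct, smul_eq_mul]
  rw [dotProduct_comm b a]
  ring

/-- Auxiliary: symmetry of the quadratic pairing for a symmetric matrix. -/
lemma dot_mulVec_symm {n : ℕ} (A : Matrix (Fin n) (Fin n) ℝ) (hA : Aᵀ = A)
    (x y : Fin n → ℝ) : x ⬝ᵥ A *ᵥ y = y ⬝ᵥ A *ᵥ x := by
  rw [Matrix.dotProduct_mulVec]
  nth_rewrite 1 [← hA]
  rw [Matrix.vecMul_transpose, dotProduct_comm]

/-- The λ-subproblem has the closed form solution `λ̃ = d - (1/σ) Π_C(σ d)`. -/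
theorem lambda_subproblem_closed_form {n : ℕ}
    (M : Matrix (Fin n) (Fin n) ℝ) (hM : M.PosDef)
    (σ : ℝ) (hσ : 0 < σ)
    (hσM : (σ • (1 : Matrix (Fin n) (Fin n) ℝ) - M⁻¹).PosSemidef)
    (C : Set (Fin n → ℝ)) (hCne : C.Nonempty) (hCcl : IsClosed C) (hCconv : Convex ℝ C)
    (g lam0 d : Fin n → ℝ)
    (hd : d = (1/σ) • (M⁻¹ *ᵥ g) + lam0 - (1/σ) • (M⁻¹ *ᵥ lam0))
    -- `P = Π_C(σ d)`, the Euclidean projection of `σ d` onto `C`: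
    (P : Fin n → ℝ) (hPmem : P ∈ C)
    (hPproj : ∀ z ∈ C, (σ • d - P) ⬝ᵥ (σ • d - P) ≤ (σ • d - z) ⬝ᵥ (σ • d - z))
    (lamt : Fin n → ℝ) (hlamt : lamt = d - (1/σ) • P) :
    (∀ lam : Fin n → ℝ, objLam M σ C g lam0 lamt ≤ objLam M σ C g lam0 lam) ∧
    (∀ lam : Fin n → ℝ, (∀ lam' : Fin n → ℝ, objLam M σ C g lam0 lam ≤ objLam M σ C g lam0 lam')
      → lam = lamt) := by
  have hσne : σ ≠ 0 := hσ.ne'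
  -- symmetry of M⁻¹
  have hAt : (M⁻¹)ᵀ = M⁻¹ := by
    have := hM.inv.isHermitian
    rwa [Matrix.IsHermitian, Matrix.conjTranspose_eq_transpose_of_trivial] at this
  have hAsym : ∀ x y : Fin n → ℝ, x ⬝ᵥ M⁻¹ *ᵥ y = y ⬝ᵥ M⁻¹ *ᵥ x :=
    dot_mulVec_symm M⁻¹ hAt
  -- basic scalar identities
  have hσd : σ • d = M⁻¹ *ᵥ g + σ • lam0 - M⁻¹ *ᵥ lam0 := by
    rw [hd, smul_sub, smul_add, smul_smul, smul_smul, mul_one_div_cancel hσne, one_smul,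
      one_smul]
  have hσlamt : σ • lamt = σ • d - P := by
    rw [hlamt, smul_sub, smul_smul, mul_one_div_cancel hσne, one_smul]
  -- the gradient of the quadratic part at lamt is -P
  have hgradv : M⁻¹ *ᵥ (lamt - g) + σ • (lamt - lam0) - M⁻¹ *ᵥ (lamt - lam0) = -P := by
    have h1 : M⁻¹ *ᵥ (lamt - g) + σ • (lamt - lam0) - M⁻¹ *ᵥ (lamt - lam0)
        = σ • lamt - (M⁻¹ *ᵥ g + σ • lam0 - M⁻¹ *ᵥ lam0) := by
      rw [Matrix.mulVec_sub, Matrix.mulVec_sub, smul_sub]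
      abel
    rw [h1, hσlamt, hσd]
    abel
  -- quadratic expansion lemmas
  have hExp : ∀ x u : Fin n → ℝ,
      (x + u) ⬝ᵥ M⁻¹ *ᵥ (x + u)
        = x ⬝ᵥ M⁻¹ *ᵥ x + 2 * (u ⬝ᵥ M⁻¹ *ᵥ x) + u ⬝ᵥ M⁻¹ *ᵥ u := by
    intro x u
    rw [Matrix.mulVec_add, dotProduct_add, add_dotProduct, add_dotProduct, hAsym x u]
    ring
  have hExpDot : ∀ x u : Fin n → ℝ,
      (x + u) ⬝ᵥ (x + u) = x ⬝ᵥ x + 2 * (u ⬝ᵥ x) + u ⬝ᵥ u := by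
    intro x u
    rw [dotProduct_add, add_dotProduct, add_dotProduct, dotProduct_comm x u]
    ring
  have hQ : ∀ w : Fin n → ℝ,
      w ⬝ᵥ ((σ • (1 : Matrix (Fin n) (Fin n) ℝ) - M⁻¹) *ᵥ w)
        = σ * (w ⬝ᵥ w) - w ⬝ᵥ M⁻¹ *ᵥ w := by
    intro w
    rw [Matrix.sub_mulVec, dotProduct_sub, Matrix.smul_mulVec, Matrix.one_mulVec,
      dotProduct_smul, smul_eq_mul]
  have hobj : ∀ lam : Fin n → ℝ,
      objLam M σ C g lam0 lam = suppFn C lam + ((quadPart M σ g lam0 lam : ℝ) : EReal) := by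
    intro lam; rfl
  -- the key exact identity
  have key : ∀ lam : Fin n → ℝ,
      quadPart M σ g lam0 lam = quadPart M σ g lam0 lamt + P ⬝ᵥ (lamt - lam)
        + σ/2 * ((lam - lamt) ⬝ᵥ (lam - lamt)) := by
    intro lam
    have e1 : lam - g = (lamt - g) + (lam - lamt) := by abel
    have e2 : lam - lam0 = (lamt - lam0) + (lam - lamt) := by abel
    have e3 : lamt - lam = -(lam - lamt) := by abel
    have h0 := congrArg (fun v => (lam - lamt) ⬝ᵥ v) hgradv
    simp only [dotProduct_add, dotProduct_sub, dotProduct_neg, dotProduct_smul,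
      smul_eq_mul] at h0
    rw [dotProduct_comm (lam - lamt) P] at h0
    simp only [dotProduct_sub] at h0
    simp only [quadPart]
    rw [e1, e2, e3, hQ, hQ, hExp, hExp, hExpDot, dotProduct_neg]
    simp only [dotProduct_sub]
    linear_combination h0
  -- nonnegativity of the extra term
  have hnn : ∀ lam : Fin n → ℝ, 0 ≤ σ/2 * ((lam - lamt) ⬝ᵥ (lam - lamt)) :=
    fun lam => mul_nonneg (by linarith) (dot_self_nonneg' _)
  have hreal : ∀ lam : Fin n → ℝ,
      lamt ⬝ᵥ P + quadPart M σ g lam0 lamt + σ/2 * ((lam - lamt) ⬝ᵥ (lam - lamt))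
        = lam ⬝ᵥ P + quadPart M σ g lam0 lam := by
    intro lam
    have hc1 : P ⬝ᵥ (lamt - lam) = lamt ⬝ᵥ P - lam ⬝ᵥ P := by
      rw [dotProduct_sub, dotProduct_comm P lamt, dotProduct_comm P lam]
    rw [key lam, hc1]
    ring
  -- variational inequality for the projection
  have hVI : ∀ z ∈ C, (σ • d - P) ⬝ᵥ (z - P) ≤ 0 := by
    intro z hz
    by_contra hc
    push_neg at hc
    have hs0 : 0 ≤ (z - P) ⬝ᵥ (z - P) := dot_self_nonneg' _
    have hsne : (z - P) ⬝ᵥ (z - P) ≠ 0 := by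
      intro h0
      have hz0 : z - P = 0 := dotProduct_self_eq_zero.mp h0
      rw [hz0, dotProduct_zero] at hc
      exact lt_irrefl 0 hc
    have hs : 0 < (z - P) ⬝ᵥ (z - P) := lt_of_le_of_ne hs0 (Ne.symm hsne)
    set t : ℝ := min 1 (((σ • d - P) ⬝ᵥ (z - P)) / ((z - P) ⬝ᵥ (z - P))) with ht
    have ht0 : 0 < t := lt_min one_pos (div_pos hc hs)
    have ht1 : t ≤ 1 := min_le_left _ _
    have hts : t * ((z - P) ⬝ᵥ (z - P)) ≤ (σ • d - P) ⬝ᵥ (z - P) := by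
      have hm := min_le_right 1 (((σ • d - P) ⬝ᵥ (z - P)) / ((z - P) ⬝ᵥ (z - P)))
      calc t * ((z - P) ⬝ᵥ (z - P))
          ≤ (((σ • d - P) ⬝ᵥ (z - P)) / ((z - P) ⬝ᵥ (z - P))) * ((z - P) ⬝ᵥ (z - P)) :=
            mul_le_mul_of_nonneg_right hm hs0
        _ = (σ • d - P) ⬝ᵥ (z - P) := div_mul_cancel₀ _ hsne
    have hmem : (1 - t) • P + t • z ∈ C :=
      hCconv hPmem hz (by linarith) ht0.le (by ring)
    have hqq := hPproj _ hmem
    have hvec : σ • d - ((1 - t) • P + t • z) = (σ • d - P) - t • (z - P) := by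
      rw [smul_sub, sub_smul, one_smul]
      abel
    rw [hvec] at hqq
    rw [dot_sub_smul_expand (σ • d - P) (z - P) t] at hqq
    nlinarith [mul_pos ht0 hc, mul_le_mul_of_nonneg_left hts ht0.le]
  -- support function facts
  have hsupp_ge : ∀ lam : Fin n → ℝ, ((lam ⬝ᵥ P : ℝ) : EReal) ≤ suppFn C lam := by
    intro lam
    exact le_iSup (fun z : C => ((lam ⬝ᵥ (z : Fin n → ℝ) : ℝ) : EReal)) ⟨P, hPmem⟩
  have hsup_lamt : suppFn C lamt = ((lamt ⬝ᵥ P : ℝ) : EReal) := by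
    refine le_antisymm (iSup_le fun z => ?_) (hsupp_ge lamt)
    refine EReal.coe_le_coe_iff.mpr ?_
    have h1 := hVI (z : Fin n → ℝ) z.2
    rw [← hσlamt, smul_dotProduct, dotProduct_sub, smul_eq_mul] at h1
    nlinarith
  -- objLam at lamt is the real number lamt ⬝ᵥ P + quadPart
  have hobjlamt : objLam M σ C g lam0 lamt
      = ((lamt ⬝ᵥ P + quadPart M σ g lam0 lamt : ℝ) : EReal) := by
    rw [hobj, hsup_lamt, ← EReal.coe_add]
  have hlow : ∀ lam : Fin n → ℝ,
      ((lam ⬝ᵥ P + quadPart M σ g lam0 lam : ℝ) : EReal) ≤ objLam M σ C g lam0 lam := by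
    intro lam
    rw [hobj, EReal.coe_add]
    exact add_le_add (hsupp_ge lam) le_rfl
  constructor
  · intro lam
    calc objLam M σ C g lam0 lamt
        = ((lamt ⬝ᵥ P + quadPart M σ g lam0 lamt : ℝ) : EReal) := hobjlamt
      _ ≤ ((lam ⬝ᵥ P + quadPart M σ g lam0 lam : ℝ) : EReal) := by
          refine EReal.coe_le_coe_iff.mpr ?_
          have ha := hreal lam
          have hb := hnn lam
          linarith
      _ ≤ objLam M σ C g lam0 lam := hlow lam
  · intro lam hmin
    have h1 : ((lam ⬝ᵥ P + quadPart M σ g lam0 lam : ℝ) : EReal)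
        ≤ ((lamt ⬝ᵥ P + quadPart M σ g lam0 lamt : ℝ) : EReal) :=
      le_trans (hlow lam) (by rw [← hobjlamt]; exact hmin lamt)
    have h2 := EReal.coe_le_coe_iff.mp h1
    have h3 : σ/2 * ((lam - lamt) ⬝ᵥ (lam - lamt)) ≤ 0 := by
      have ha := hreal lam
      linarith
    have h4 : (lam - lamt) ⬝ᵥ (lam - lamt) = 0 := by
      have hb := dot_self_nonneg' (lam - lamt)
      nlinarith
    exact sub_eq_zero.mp (dotProduct_self_eq_zero.mp h4)
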